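/- For every n ≥ 1 and all x, x′ ∈ X, |log(Nₙ(x)/N_{n−1}(x)) − log(Nₙ(x′)/N_{n−1}(x′))| ≤ ρ^{n−1}/(1 − ρ), where ρ = 1 − σ₋/σ₊. (This is inequality (12) of Lemma 3 in explicit finite-dimensional form: the one-step conditional log-densities of the observations computed from two different initial conditions of the hidden chain differ by at most ρ^{n−1}/(1 − ρ), uniformly in the observation functions.) -/

import Mathlib

open MeasureTheory

/-- `Nseq μ q g x n = ∫_{Xⁿ} ∏_{k=1}ⁿ q(x_{k−1}, x_k) g_k(x_k) μ(dx₁)⋯μ(dxₙ)`,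
with `x₀ := x` (for `n = 0` this is `1`, the empty product integrated against a
probability measure). The coordinate `xs k` of `xs : Fin n → X` plays the role
of `x_{k+1}`, and `g (k+1)` plays the role of `g_{k+1}`. -/
noncomputable def Nseq {X : Type*} [MeasurableSpace X] (μ : Measure X)
    (q : X → X → ℝ) (g : ℕ → X → ℝ) (x : X) (n : ℕ) : ℝ :=
  ∫ xs : Fin n → X,
    ∏ k : Fin n,
      q (if (k : ℕ) = 0 then x
         else xs ⟨(k : ℕ) - 1, Nat.lt_of_le_of_lt (Nat.sub_le _ _) k.isLt⟩) (xs k) *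
        g ((k : ℕ) + 1) (xs k)
    ∂(Measure.pi fun _ => μ)

namespace OneStepAux

open ENNReal

lemma alg_key (κ ρ Km a b u v u' v' : ℝ)
    (hκ : 0 ≤ κ) (hρ0 : 0 ≤ ρ) (hρ1 : ρ ≤ 1) (hρκ : ρ = (1 - ρ) * κ)
    (hKm : 0 ≤ Km)
    (ha : 0 < a) (hb : 0 < b)
    (hu : 0 ≤ u) (hv : 0 ≤ v) (hu' : 0 ≤ u') (hv' : 0 ≤ v')
    (h2 : u * b ≤ (1 + Km) * (v * a))
    (h3 : a * v' ≤ (1 + Km) * (b * u'))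
    (h4 : u * v' ≤ (1 + Km) * (v * u'))
    (h5 : v ≤ κ * b) (h6 : v' ≤ κ * b) (h7 : u' ≤ κ * a) :
    (a + u) * (b + v') ≤ (1 + ρ * Km) * ((a + u') * (b + v)) := by
  have hD1 : 1 ≤ 1 + ρ * Km := by linarith [mul_nonneg hρ0 hKm]
  have h1ρ : (0:ℝ) ≤ 1 - ρ := by linarith
  have hrb : ρ * b = ((1 - ρ) * κ) * b := by rw [← hρκ]
  have hra : ρ * a = ((1 - ρ) * κ) * a := by rw [← hρκ]
  have hkey : (1 - ρ) * v ≤ ρ * b := by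
    have := mul_le_mul_of_nonneg_left h5 h1ρ
    linarith [hrb]
  have hkey' : (1 - ρ) * v' ≤ ρ * b := by
    have := mul_le_mul_of_nonneg_left h6 h1ρ
    linarith [hrb]
  have hkeyu' : (1 - ρ) * u' ≤ ρ * a := by
    have := mul_le_mul_of_nonneg_left h7 h1ρ
    linarith [hra]
  rcases le_or_gt (v' * a) (u' * b) with hc1 | hc1
  · -- case 1
    have claim : (a + u) * b ≤ (1 + ρ * Km) * (a * (b + v)) := by
      have hint := mul_le_mul_of_nonneg_left hkey (mul_nonneg hKm ha.le)
      linarith [hint, h2]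
    have case' : a * (b + v') ≤ b * (a + u') := by linarith [hc1]
    have hmul := mul_le_mul claim case' (by positivity) (by positivity)
    have h2' : (a*b) * ((a + u) * (b + v')) ≤ (a*b) * ((1 + ρ * Km) * ((a + u') * (b + v))) := by
      calc (a*b) * ((a + u) * (b + v')) = ((a + u) * b) * (a * (b + v')) := by ring
      _ ≤ ((1 + ρ * Km) * (a * (b + v))) * (b * (a + u')) := hmul
      _ = (a*b) * ((1 + ρ * Km) * ((a + u') * (b + v))) := by ring
    exact le_of_mul_le_mul_left h2' (by positivity)
  · rcases le_or_gt (u * b) (v * a) with hc2 | hc2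
    · -- case 2a
      have claim1 : (a + u) * b ≤ a * (b + v) := by linarith [hc2]
      have claim2 : a * (b + v') ≤ (1 + ρ * Km) * (b * (a + u')) := by
        have hint := mul_le_mul_of_nonneg_left hkeyu' (mul_nonneg hKm hb.le)
        linarith [hint, h3]
      have hmul := mul_le_mul claim1 claim2 (by positivity) (by positivity)
      have h2' : (a*b) * ((a + u) * (b + v')) ≤ (a*b) * ((1 + ρ * Km) * ((a + u') * (b + v))) := by
        calc (a*b) * ((a + u) * (b + v')) = ((a + u) * b) * (a * (b + v')) := by ring
        _ ≤ (a * (b + v)) * ((1 + ρ * Km) * (b * (a + u'))) := hmul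
        _ = (a*b) * ((1 + ρ * Km) * ((a + u') * (b + v))) := by ring
      exact le_of_mul_le_mul_left h2' (by positivity)
    · -- case 2b
      have hv'pos : 0 < v' :=
        pos_of_mul_pos_left (lt_of_le_of_lt (mul_nonneg hu' hb.le) hc1) ha.le
      have hupos : 0 < u :=
        pos_of_mul_pos_left (lt_of_le_of_lt (mul_nonneg hv ha.le) hc2) hb.le
      have hvu' : 0 < v * u' := by
        have h0 : 0 < u * v' := mul_pos hupos hv'pos
        have h1 : 0 < (1 + Km) * (v * u') := lt_of_lt_of_le h0 h4
        exact pos_of_mul_pos_right h1 (by linarith)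
      have hvpos : 0 < v := pos_of_mul_pos_left hvu' hu'
      have c1 : (a + u) * (b * v) ≤ ((1 - ρ) * (a * v) + ρ * (u * b)) * (b + v) := by
        have hd : 0 ≤ (u * b - v * a) * (ρ * b - (1 - ρ) * v) :=
          mul_nonneg (by linarith) (by linarith)
        linarith [hd]
      have c2 : ((1 - ρ) * (a * v') + ρ * (u' * b)) * (b + v') ≤ (a + u') * (b * v') := by
        have hd : 0 ≤ (v' * a - u' * b) * (ρ * b - (1 - ρ) * v') :=
          mul_nonneg (by linarith) (by linarith)
        linarith [hd]
      have c3 : ((1 - ρ) * (a * v) + ρ * (u * b)) * v' ≤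
          (1 + ρ * Km) * (((1 - ρ) * (a * v') + ρ * (u' * b)) * v) := by
        have H1 := mul_le_mul_of_nonneg_left h4 (mul_nonneg hρ0 hb.le)
        have H2 := mul_le_mul_of_nonneg_left hc1.le
          (mul_nonneg (mul_nonneg (mul_nonneg hρ0 h1ρ) hKm) hv)
        linarith [H1, H2]
      have h1 : ((a + u) * (b + v')) * (b * v * v') ≤
          ((1 + ρ * Km) * ((a + u') * (b + v))) * (b * v * v') := by
        calc ((a + u) * (b + v')) * (b * v * v') = ((a+u)*(b*v)) * ((b+v')*v') := by ring
        _ ≤ (((1 - ρ) * (a * v) + ρ * (u * b)) * (b + v)) * ((b+v')*v') :=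
              mul_le_mul_of_nonneg_right c1 (by positivity)
        _ = (((1 - ρ) * (a * v) + ρ * (u * b)) * v') * ((b+v)*(b+v')) := by ring
        _ ≤ ((1 + ρ * Km) * (((1 - ρ) * (a * v') + ρ * (u' * b)) * v)) * ((b+v)*(b+v')) :=
              mul_le_mul_of_nonneg_right c3 (by positivity)
        _ = ((1 + ρ * Km) * ((b+v) * v)) * (((1 - ρ) * (a * v') + ρ * (u' * b)) * (b + v')) := by
              ring
        _ ≤ ((1 + ρ * Km) * ((b+v) * v)) * ((a + u') * (b * v')) :=
              mul_le_mul_of_nonneg_left c2 (by positivity)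
        _ = ((1 + ρ * Km) * ((a + u') * (b + v))) * (b * v * v') := by ring
      exact le_of_mul_le_mul_right h1 (by positivity)

variable {X : Type*} [MeasurableSpace X]

/-- ENNReal-valued recursive version of `Nseq`. -/
noncomputable def L (μ : Measure X) (q : X → X → ℝ) : (ℕ → X → ℝ) → ℕ → X → ℝ≥0∞
  | _, 0, _ => 1
  | g, n+1, x => ∫⁻ y, ENNReal.ofReal (q x y * g 1 y) * L μ q (fun k => g (k+1)) n y ∂μ

lemma L_zero (μ : Measure X) (q : X → X → ℝ) (g : ℕ → X → ℝ) (x : X) :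
    L μ q g 0 x = 1 := rfl

lemma L_succ (μ : Measure X) (q : X → X → ℝ) (g : ℕ → X → ℝ) (n : ℕ) (x : X) :
    L μ q g (n+1) x
      = ∫⁻ y, ENNReal.ofReal (q x y * g 1 y) * L μ q (fun k => g (k+1)) n y ∂μ := rfl

section Meas

variable {μ : Measure X} [SFinite μ] {q : X → X → ℝ}
variable {σm σp : ℝ}

lemma measurable_L (hq : Measurable (Function.uncurry q))
    (g : ℕ → X → ℝ) (hgm : ∀ k, 1 ≤ k → Measurable (g k)) (n : ℕ) :
    Measurable (fun x => L μ q g n x) := by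
  induction n generalizing g with
  | zero => simpa [L_zero] using measurable_const
  | succ n ih =>
      have h1 : Measurable fun z : X × X =>
          ENNReal.ofReal (q z.1 z.2 * g 1 z.2) * L μ q (fun k => g (k+1)) n z.2 := by
        refine Measurable.mul ?_ ?_
        · exact (hq.mul ((hgm 1 le_rfl).comp measurable_snd)).ennreal_ofReal
        · exact (ih (fun k => g (k+1)) (fun k hk => hgm (k+1) (by omega))).comp measurable_snd
      simpa [L_succ] using h1.lintegral_prod_right'

lemma L_bounds (hσm : 0 ≤ σm) (hql : ∀ x y, σm ≤ q x y) (hqu : ∀ x y, q x y ≤ σp)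
    (g : ℕ → X → ℝ) (hgm : ∀ k, 1 ≤ k → Measurable (g k))
    (hg0 : ∀ k, 1 ≤ k → ∀ y, 0 ≤ g k y) (n : ℕ) (x : X) :
    ENNReal.ofReal σm ^ n * ∏ i ∈ Finset.range n, (∫⁻ y, ENNReal.ofReal (g (i+1) y) ∂μ)
        ≤ L μ q g n x ∧
      L μ q g n x ≤
        ENNReal.ofReal σp ^ n * ∏ i ∈ Finset.range n, (∫⁻ y, ENNReal.ofReal (g (i+1) y) ∂μ) := by
  have hσp : (0:ℝ) ≤ σp := le_trans hσm (le_trans (hql x x) (hqu x x))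
  induction n generalizing g x with
  | zero => simp [L_zero]
  | succ n ih =>
      set g' : ℕ → X → ℝ := fun k => g (k+1) with hg'
      have hgm' : ∀ k, 1 ≤ k → Measurable (g' k) := fun k hk => hgm (k+1) (by omega)
      have hg0' : ∀ k, 1 ≤ k → ∀ y, 0 ≤ g' k y := fun k hk => hg0 (k+1) (by omega)
      have hprod : ∏ i ∈ Finset.range (n+1), (∫⁻ y, ENNReal.ofReal (g (i+1) y) ∂μ)
          = (∫⁻ y, ENNReal.ofReal (g 1 y) ∂μ) *
            ∏ i ∈ Finset.range n, (∫⁻ y, ENNReal.ofReal (g' (i+1) y) ∂μ) := by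
        rw [Finset.prod_range_succ']
        ring
      constructor
      · rw [L_succ]
        calc ENNReal.ofReal σm ^ (n+1) *
              ∏ i ∈ Finset.range (n+1), (∫⁻ y, ENNReal.ofReal (g (i+1) y) ∂μ)
            = ∫⁻ y, (ENNReal.ofReal σm *
                (ENNReal.ofReal σm ^ n *
                  ∏ i ∈ Finset.range n, (∫⁻ z, ENNReal.ofReal (g' (i+1) z) ∂μ)))
                * ENNReal.ofReal (g 1 y) ∂μ := by
              rw [lintegral_const_mul _ ((hgm 1 le_rfl).ennreal_ofReal)]
              rw [hprod]; ring
        _ ≤ ∫⁻ y, ENNReal.ofReal (q x y * g 1 y) * L μ q g' n y ∂μ := by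
              refine lintegral_mono fun y => ?_
              have h1 : ENNReal.ofReal σm * ENNReal.ofReal (g 1 y)
                  ≤ ENNReal.ofReal (q x y * g 1 y) := by
                rw [← ENNReal.ofReal_mul hσm]
                exact ENNReal.ofReal_le_ofReal
                  (mul_le_mul_of_nonneg_right (hql x y) (hg0 1 le_rfl y))
              calc ENNReal.ofReal σm * (ENNReal.ofReal σm ^ n *
                    ∏ i ∈ Finset.range n, (∫⁻ z, ENNReal.ofReal (g' (i+1) z) ∂μ))
                  * ENNReal.ofReal (g 1 y)
                  = (ENNReal.ofReal σm * ENNReal.ofReal (g 1 y)) *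
                    (ENNReal.ofReal σm ^ n *
                      ∏ i ∈ Finset.range n, (∫⁻ z, ENNReal.ofReal (g' (i+1) z) ∂μ)) := by ring
                _ ≤ ENNReal.ofReal (q x y * g 1 y) * L μ q g' n y :=
                    mul_le_mul' h1 (ih g' hgm' hg0' y).1
      · rw [L_succ]
        calc ∫⁻ y, ENNReal.ofReal (q x y * g 1 y) * L μ q g' n y ∂μ
            ≤ ∫⁻ y, (ENNReal.ofReal σp *
                (ENNReal.ofReal σp ^ n *
                  ∏ i ∈ Finset.range n, (∫⁻ z, ENNReal.ofReal (g' (i+1) z) ∂μ)))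
                * ENNReal.ofReal (g 1 y) ∂μ := by
              refine lintegral_mono fun y => ?_
              have h1 : ENNReal.ofReal (q x y * g 1 y)
                  ≤ ENNReal.ofReal σp * ENNReal.ofReal (g 1 y) := by
                rw [← ENNReal.ofReal_mul hσp]
                exact ENNReal.ofReal_le_ofReal
                  (mul_le_mul_of_nonneg_right (hqu x y) (hg0 1 le_rfl y))
              calc ENNReal.ofReal (q x y * g 1 y) * L μ q g' n y
                  ≤ (ENNReal.ofReal σp * ENNReal.ofReal (g 1 y)) *
                    (ENNReal.ofReal σp ^ n *
                      ∏ i ∈ Finset.range n, (∫⁻ z, ENNReal.ofReal (g' (i+1) z) ∂μ)) :=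
                    mul_le_mul' h1 (ih g' hgm' hg0' y).2
                _ = (ENNReal.ofReal σp * (ENNReal.ofReal σp ^ n *
                      ∏ i ∈ Finset.range n, (∫⁻ z, ENNReal.ofReal (g' (i+1) z) ∂μ)))
                    * ENNReal.ofReal (g 1 y) := by ring
        _ = ENNReal.ofReal σp ^ (n+1) *
              ∏ i ∈ Finset.range (n+1), (∫⁻ y, ENNReal.ofReal (g (i+1) y) ∂μ) := by
              rw [lintegral_const_mul _ ((hgm 1 le_rfl).ennreal_ofReal)]
              rw [hprod]; ring

lemma J_ne_top (g : X → ℝ) (hgi : Integrable g μ) :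
    (∫⁻ y, ENNReal.ofReal (g y) ∂μ) ≠ ⊤ := hgi.lintegral_lt_top.ne

lemma J_ne_zero (g : X → ℝ) (hgm : Measurable g) (hg0 : ∀ y, 0 ≤ g y)
    (hgpos : 0 < ∫ y, g y ∂μ) : (∫⁻ y, ENNReal.ofReal (g y) ∂μ) ≠ 0 := by
  intro h
  rw [integral_eq_lintegral_of_nonneg_ae (Filter.Eventually.of_forall hg0)
    hgm.aestronglyMeasurable, h] at hgpos
  simp at hgpos

lemma L_ne_top (hσm : 0 ≤ σm) (hql : ∀ x y, σm ≤ q x y) (hqu : ∀ x y, q x y ≤ σp)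
    (g : ℕ → X → ℝ) (hgm : ∀ k, 1 ≤ k → Measurable (g k))
    (hg0 : ∀ k, 1 ≤ k → ∀ y, 0 ≤ g k y) (hgi : ∀ k, 1 ≤ k → Integrable (g k) μ)
    (n : ℕ) (x : X) : L μ q g n x ≠ ⊤ := by
  refine ne_top_of_le_ne_top ?_ (L_bounds hσm hql hqu g hgm hg0 n x).2
  refine ENNReal.mul_ne_top (ENNReal.pow_ne_top ENNReal.ofReal_ne_top) ?_
  exact (ENNReal.prod_lt_top fun i _ => (J_ne_top _ (hgi (i+1) (by omega))).lt_top).ne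

lemma L_ne_zero (hσm : 0 < σm) (hql : ∀ x y, σm ≤ q x y) (hqu : ∀ x y, q x y ≤ σp)
    (g : ℕ → X → ℝ) (hgm : ∀ k, 1 ≤ k → Measurable (g k))
    (hg0 : ∀ k, 1 ≤ k → ∀ y, 0 ≤ g k y) (hgpos : ∀ k, 1 ≤ k → 0 < ∫ y, g k y ∂μ)
    (n : ℕ) (x : X) : L μ q g n x ≠ 0 := by
  refine ne_of_gt (lt_of_lt_of_le ?_ (L_bounds hσm.le hql hqu g hgm hg0 n x).1)
  refine ENNReal.mul_pos ?_ ?_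
  · exact (pow_ne_zero _ (by simpa using hσm))
  · refine (Finset.prod_ne_zero_iff).2 fun i _ => ?_
    exact J_ne_zero _ (hgm (i+1) (by omega)) (hg0 (i+1) (by omega)) (hgpos (i+1) (by omega))

end Meas

noncomputable def integrandE (q : X → X → ℝ) (g : ℕ → X → ℝ) (x : X) (n : ℕ) :
    (Fin n → X) → ℝ≥0∞ := fun xs =>
  ∏ k : Fin n,
    ENNReal.ofReal
      (q (if (k : ℕ) = 0 then x
          else xs ⟨(k : ℕ) - 1, Nat.lt_of_le_of_lt (Nat.sub_le _ _) k.isLt⟩) (xs k) *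
        g ((k : ℕ) + 1) (xs k))

lemma measurable_integrandE {q : X → X → ℝ} (hq : Measurable (Function.uncurry q))
    {g : ℕ → X → ℝ} (hgm : ∀ k, 1 ≤ k → Measurable (g k)) (x : X) (n : ℕ) :
    Measurable (integrandE q g x n) := by
  refine Finset.measurable_prod _ fun k _ => ?_
  refine Measurable.ennreal_ofReal (Measurable.mul ?_ ?_)
  · have hfirst : Measurable (fun xs : Fin n → X =>
        (if (k : ℕ) = 0 then x
         else xs ⟨(k : ℕ) - 1, Nat.lt_of_le_of_lt (Nat.sub_le _ _) k.isLt⟩)) := by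
      by_cases h : (k : ℕ) = 0
      · simp only [if_pos h]; exact measurable_const
      · simp only [if_neg h]; exact measurable_pi_apply _
    exact hq.comp (hfirst.prodMk (measurable_pi_apply k))
  · exact (hgm _ (by omega)).comp (measurable_pi_apply k)

omit [MeasurableSpace X] in
lemma cons_mk (n : ℕ) (y : X) (ys : Fin n → X) (i : ℕ) (h : i < n + 1) :
    (Fin.cons y ys : Fin (n+1) → X) ⟨i, h⟩
      = if hi : i = 0 then y else ys ⟨i - 1, by omega⟩ := by
  rcases i with _ | i
  · simp
  · rw [show (⟨i+1, h⟩ : Fin (n+1)) = Fin.succ ⟨i, by omega⟩ from rfl, Fin.cons_succ]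
    simp

lemma integrandE_cons (q : X → X → ℝ) (g : ℕ → X → ℝ) (x : X) (n : ℕ)
    (y : X) (ys : Fin n → X) :
    integrandE q g x (n+1) (Fin.cons y ys)
      = ENNReal.ofReal (q x y * g 1 y) * integrandE q (fun k => g (k+1)) y n ys := by
  unfold integrandE
  rw [Fin.prod_univ_succ]
  refine congr_arg₂ (· * ·) ?_ ?_
  · simp
  · refine Finset.prod_congr rfl fun j _ => ?_
    have hne : ¬ (((j.succ : Fin (n+1)) : ℕ) = 0) := by simp
    rw [Fin.cons_succ, if_neg hne, cons_mk]
    have h1 : ((j.succ : Fin (n+1)) : ℕ) - 1 = (j : ℕ) := by simp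
    by_cases hj : (j : ℕ) = 0
    · simp [h1, hj]
    · simp [h1, hj]

lemma Lpi_eq_L (μ : Measure X) [IsProbabilityMeasure μ] {q : X → X → ℝ}
    (hq : Measurable (Function.uncurry q)) (g : ℕ → X → ℝ)
    (hgm : ∀ k, 1 ≤ k → Measurable (g k)) (n : ℕ) (x : X) :
    ∫⁻ xs, integrandE q g x n xs ∂(Measure.pi fun _ : Fin n => μ) = L μ q g n x := by
  induction n generalizing g x with
  | zero =>
      show _ = (1 : ℝ≥0∞)
      rw [show (fun xs : Fin 0 → X => integrandE q g x 0 xs) = fun _ => 1 by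
        funext xs; simp [integrandE]]
      simp
  | succ n ih =>
      have hgm' : ∀ k, 1 ≤ k → Measurable ((fun k => g (k+1)) k) :=
        fun k hk => hgm (k+1) (by omega)
      have hF : Measurable (integrandE q g x (n+1)) := measurable_integrandE hq hgm x (n+1)
      have hmp := measurePreserving_piFinSuccAbove (fun _ : Fin (n+1) => μ) 0
      set e := MeasurableEquiv.piFinSuccAbove (fun _ : Fin (n+1) => X) 0 with he
      have hFc : Measurable fun z : X × (Fin n → X) => integrandE q g x (n+1) (e.symm z) :=
        hF.comp e.symm.measurable
      have key : ∫⁻ xs, integrandE q g x (n+1) xs ∂(Measure.pi fun _ : Fin (n+1) => μ)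
          = ∫⁻ z, integrandE q g x (n+1) (e.symm z)
              ∂(μ.prod (Measure.pi fun _ : Fin n => μ)) := by
        rw [← hmp.map_eq]
        rw [lintegral_map hFc e.measurable]
        refine lintegral_congr fun xs => ?_
        rw [e.symm_apply_apply]
      rw [key]
      have hsymm : ∀ z : X × (Fin n → X), e.symm z = Fin.cons z.1 z.2 := by
        rintro ⟨z1, z2⟩
        rw [he]
        simp [MeasurableEquiv.piFinSuccAbove_symm_apply, Fin.insertNth_zero,
          Fin.consEquiv]
      rw [lintegral_prod _ hFc.aemeasurable]
      show (∫⁻ y, ∫⁻ ys, integrandE q g x (n+1) (e.symm (y, ys))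
          ∂(Measure.pi fun _ : Fin n => μ) ∂μ) = _
      have hinner : ∀ y : X, (∫⁻ ys, integrandE q g x (n+1) (e.symm (y, ys))
          ∂(Measure.pi fun _ : Fin n => μ))
          = ENNReal.ofReal (q x y * g 1 y) * L μ q (fun k => g (k+1)) n y := by
        intro y
        have h1 : ∀ ys : Fin n → X, integrandE q g x (n+1) (e.symm (y, ys))
            = ENNReal.ofReal (q x y * g 1 y) * integrandE q (fun k => g (k+1)) y n ys := by
          intro ys
          rw [hsymm (y, ys)]
          exact integrandE_cons q g x n y ys
        rw [lintegral_congr h1,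
          lintegral_const_mul _ (measurable_integrandE hq hgm' y n), ih _ hgm' y]
      rw [lintegral_congr hinner]
      rfl

lemma Nseq_eq_toReal (μ : Measure X) {σm : ℝ} (hσm : 0 ≤ σm) {q : X → X → ℝ}
    (hq : Measurable (Function.uncurry q)) (hql : ∀ x y, σm ≤ q x y)
    (g : ℕ → X → ℝ) (hgm : ∀ k, 1 ≤ k → Measurable (g k))
    (hg0 : ∀ k, 1 ≤ k → ∀ y, 0 ≤ g k y) (x : X) (n : ℕ) :
    Nseq μ q g x n
      = (∫⁻ xs, integrandE q g x n xs ∂(Measure.pi fun _ : Fin n => μ)).toReal := by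
  have hfac : ∀ (xs : Fin n → X) (k : Fin n), 0 ≤
      q (if (k : ℕ) = 0 then x
         else xs ⟨(k : ℕ) - 1, Nat.lt_of_le_of_lt (Nat.sub_le _ _) k.isLt⟩) (xs k) *
        g ((k : ℕ) + 1) (xs k) := by
    intro xs k
    exact mul_nonneg (le_trans hσm (hql _ _)) (hg0 _ (by omega) _)
  have hmeas : Measurable fun xs : Fin n → X =>
      ∏ k : Fin n,
        q (if (k : ℕ) = 0 then x
           else xs ⟨(k : ℕ) - 1, Nat.lt_of_le_of_lt (Nat.sub_le _ _) k.isLt⟩) (xs k) *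
          g ((k : ℕ) + 1) (xs k) := by
    refine Finset.measurable_prod _ fun k _ => ?_
    refine Measurable.mul ?_ ((hgm _ (by omega)).comp (measurable_pi_apply k))
    have hfirst : Measurable (fun xs : Fin n → X =>
        (if (k : ℕ) = 0 then x
         else xs ⟨(k : ℕ) - 1, Nat.lt_of_le_of_lt (Nat.sub_le _ _) k.isLt⟩)) := by
      by_cases h : (k : ℕ) = 0
      · simp only [if_pos h]; exact measurable_const
      · simp only [if_neg h]; exact measurable_pi_apply _
    exact hq.comp (hfirst.prodMk (measurable_pi_apply k))
  rw [Nseq, integral_eq_lintegral_of_nonneg_ae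
    (Filter.Eventually.of_forall fun xs => Finset.prod_nonneg fun k _ => hfac xs k)
    hmeas.aestronglyMeasurable]
  congr 1
  refine lintegral_congr fun xs => ?_
  rw [ENNReal.ofReal_prod_of_nonneg fun k _ => hfac xs k]
  rfl

lemma main_claim {μ : Measure X} [IsProbabilityMeasure μ] {q : X → X → ℝ}
    {σm σp : ℝ} (hσm : 0 < σm) (hσ : σm ≤ σp)
    (hq : Measurable (Function.uncurry q))
    (hql : ∀ x y, σm ≤ q x y) (hqu : ∀ x y, q x y ≤ σp) (m : ℕ) :
    ∀ g : ℕ → X → ℝ, (∀ k, 1 ≤ k → Measurable (g k)) →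
      (∀ k, 1 ≤ k → ∀ y, 0 ≤ g k y) → (∀ k, 1 ≤ k → Integrable (g k) μ) →
      (∀ k, 1 ≤ k → 0 < ∫ y, g k y ∂μ) → ∀ x x' : X,
      L μ q g (m+1) x * L μ q g m x'
        ≤ ENNReal.ofReal (1 + (1 - σm/σp)^m * ((σp - σm)/σm)) *
            (L μ q g (m+1) x' * L μ q g m x) := by
  have hσp : 0 < σp := lt_of_lt_of_le hσm hσ
  set ρ : ℝ := 1 - σm/σp with hρdef
  set κ : ℝ := (σp - σm)/σm with hκdef
  have hκ0 : 0 ≤ κ := div_nonneg (by linarith) hσm.le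
  have hρ0 : 0 ≤ ρ := by
    rw [hρdef]
    have : σm/σp ≤ 1 := by rw [div_le_one hσp]; exact hσ
    linarith
  have hρ1 : ρ ≤ 1 := by
    rw [hρdef]
    have : 0 ≤ σm/σp := div_nonneg hσm.le hσp.le
    linarith
  have hρκ : ρ = (1 - ρ) * κ := by
    rw [hρdef, hκdef]
    field_simp
    ring
  have h1κσ : (1 + κ) * σm = σp := by
    rw [hκdef]; field_simp; ring
  induction m with
  | zero =>
      intro g hgm hg0 hgi hgpos x x'
      simp only [pow_zero, one_mul, L_zero, mul_one]
      rw [L_succ, L_succ]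
      have hmeas : Measurable fun y =>
          ENNReal.ofReal (q x' y * g 1 y) * L μ q (fun k => g (k+1)) 0 y := by
        refine Measurable.mul ?_ (measurable_L hq _ (fun k hk => hgm (k+1) (by omega)) 0)
        exact ((hq.comp (measurable_const.prodMk measurable_id)).mul (hgm 1 le_rfl)).ennreal_ofReal
      calc ∫⁻ y, ENNReal.ofReal (q x y * g 1 y) * L μ q (fun k => g (k+1)) 0 y ∂μ
          ≤ ∫⁻ y, ENNReal.ofReal (1 + κ) *
              (ENNReal.ofReal (q x' y * g 1 y) * L μ q (fun k => g (k+1)) 0 y) ∂μ := by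
            refine lintegral_mono fun y => ?_
            simp only [L_zero, mul_one]
            rw [← ENNReal.ofReal_mul (by positivity : (0:ℝ) ≤ 1 + κ)]
            refine ENNReal.ofReal_le_ofReal ?_
            have hg1 := hg0 1 le_rfl y
            have h1 : q x y ≤ (1 + κ) * q x' y := by
              have h2 := mul_le_mul_of_nonneg_left (hql x' y) (by positivity : (0:ℝ) ≤ 1 + κ)
              calc q x y ≤ σp := hqu x y
              _ = (1 + κ) * σm := h1κσ.symm
              _ ≤ (1 + κ) * q x' y := h2
            calc q x y * g 1 y ≤ ((1 + κ) * q x' y) * g 1 y :=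
                  mul_le_mul_of_nonneg_right h1 hg1
            _ = (1 + κ) * (q x' y * g 1 y) := by ring
        _ = ENNReal.ofReal (1 + κ) *
              ∫⁻ y, ENNReal.ofReal (q x' y * g 1 y) * L μ q (fun k => g (k+1)) 0 y ∂μ :=
            lintegral_const_mul _ hmeas
  | succ m ihm =>
      intro g hgm hg0 hgi hgpos x x'
      set g' : ℕ → X → ℝ := fun k => g (k+1) with hg'def
      have hgm' : ∀ k, 1 ≤ k → Measurable (g' k) := fun k hk => hgm (k+1) (by omega)
      have hg0' : ∀ k, 1 ≤ k → ∀ y, 0 ≤ g' k y := fun k hk => hg0 (k+1) (by omega)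
      have hgi' : ∀ k, 1 ≤ k → Integrable (g' k) μ := fun k hk => hgi (k+1) (by omega)
      have hgpos' : ∀ k, 1 ≤ k → 0 < ∫ y, g' k y ∂μ := fun k hk => hgpos (k+1) (by omega)
      have hIH := ihm g' hgm' hg0' hgi' hgpos'
      set Km : ℝ := ρ^m * κ with hKmdef
      set Tm : ℝ≥0∞ := ENNReal.ofReal (1 + Km) with hTmdef
      set P : X → ℝ≥0∞ := fun y => ENNReal.ofReal (g 1 y) * L μ q g' (m+1) y with hPdef
      set Q : X → ℝ≥0∞ := fun y => ENNReal.ofReal (g 1 y) * L μ q g' m y with hQdef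
      have hPm : Measurable P :=
        ((hgm 1 le_rfl).ennreal_ofReal).mul (measurable_L hq g' hgm' (m+1))
      have hQm : Measurable Q :=
        ((hgm 1 le_rfl).ennreal_ofReal).mul (measurable_L hq g' hgm' m)
      have hwm : ∀ z : X, Measurable fun y => ENNReal.ofReal (q z y - σm) := fun z =>
        (((hq.comp (measurable_const.prodMk measurable_id)).sub
          measurable_const)).ennreal_ofReal
      have hsplit : ∀ z y, ENNReal.ofReal (q z y)
          = ENNReal.ofReal σm + ENNReal.ofReal (q z y - σm) := by
        intro z y
        rw [← ENNReal.ofReal_add hσm.le (by linarith [hql z y])]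
        norm_num
      set A : ℝ≥0∞ := ∫⁻ y, ENNReal.ofReal σm * P y ∂μ with hAdef
      set B : ℝ≥0∞ := ∫⁻ y, ENNReal.ofReal σm * Q y ∂μ with hBdef
      set U : X → ℝ≥0∞ := fun z => ∫⁻ y, ENNReal.ofReal (q z y - σm) * P y ∂μ with hUdef
      set V : X → ℝ≥0∞ := fun z => ∫⁻ y, ENNReal.ofReal (q z y - σm) * Q y ∂μ with hVdef
      have hrec1 : ∀ z, L μ q g (m+2) z = A + U z := by
        intro z
        rw [L_succ]
        have hpt : ∀ y, ENNReal.ofReal (q z y * g 1 y) * L μ q g' (m+1) y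
            = ENNReal.ofReal σm * P y + ENNReal.ofReal (q z y - σm) * P y := by
          intro y
          rw [ENNReal.ofReal_mul (le_trans hσm.le (hql z y)), hsplit z y, hPdef]
          ring
        rw [lintegral_congr hpt, lintegral_add_left (f := fun y => ENNReal.ofReal σm * P y) (measurable_const.mul hPm)]
      have hrec0 : ∀ z, L μ q g (m+1) z = B + V z := by
        intro z
        rw [L_succ]
        have hpt : ∀ y, ENNReal.ofReal (q z y * g 1 y) * L μ q g' m y
            = ENNReal.ofReal σm * Q y + ENNReal.ofReal (q z y - σm) * Q y := by
          intro y
          rw [ENNReal.ofReal_mul (le_trans hσm.le (hql z y)), hsplit z y, hQdef]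
          ring
        rw [lintegral_congr hpt, lintegral_add_left (f := fun y => ENNReal.ofReal σm * Q y) (measurable_const.mul hQm)]
      have hcross : ∀ (w₁ w₂ : X → ℝ≥0∞), Measurable w₁ → Measurable w₂ →
          (∫⁻ y, w₁ y * P y ∂μ) * (∫⁻ y, w₂ y * Q y ∂μ)
            ≤ Tm * ((∫⁻ y, w₁ y * Q y ∂μ) * (∫⁻ y, w₂ y * P y ∂μ)) := by
        intro w₁ w₂ hw₁ hw₂
        calc (∫⁻ y, w₁ y * P y ∂μ) * (∫⁻ y, w₂ y * Q y ∂μ)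
            = ∫⁻ a, ∫⁻ b, (w₁ a * P a) * (w₂ b * Q b) ∂μ ∂μ :=
              (lintegral_lintegral_mul (hw₁.mul hPm).aemeasurable
                (hw₂.mul hQm).aemeasurable).symm
          _ ≤ ∫⁻ a, ∫⁻ b, (Tm * (w₁ a * Q a)) * (w₂ b * P b) ∂μ ∂μ := by
              refine lintegral_mono fun a => lintegral_mono fun b => ?_
              calc (w₁ a * P a) * (w₂ b * Q b)
                  = ((w₁ a * ENNReal.ofReal (g 1 a)) * (w₂ b * ENNReal.ofReal (g 1 b))) *
                    (L μ q g' (m+1) a * L μ q g' m b) := by rw [hPdef, hQdef]; ring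
                _ ≤ ((w₁ a * ENNReal.ofReal (g 1 a)) * (w₂ b * ENNReal.ofReal (g 1 b))) *
                    (Tm * (L μ q g' (m+1) b * L μ q g' m a)) :=
                    mul_le_mul' le_rfl (hIH a b)
                _ = (Tm * (w₁ a * Q a)) * (w₂ b * P b) := by rw [hPdef, hQdef]; ring
          _ = Tm * ((∫⁻ y, w₁ y * Q y ∂μ) * (∫⁻ y, w₂ y * P y ∂μ)) := by
              rw [lintegral_lintegral_mul (f := fun y => Tm * (w₁ y * Q y)) (g := fun y => w₂ y * P y)
                ((hw₁.mul hQm).const_mul Tm).aemeasurable (hw₂.mul hPm).aemeasurable]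
              rw [lintegral_const_mul _ (f := fun y => w₁ y * Q y) (hw₁.mul hQm)]
              ring
      have h2 : U x * B ≤ Tm * (V x * A) := by
        simpa using hcross (fun y => ENNReal.ofReal (q x y - σm))
          (fun _ => ENNReal.ofReal σm) (hwm x) measurable_const
      have h3 : A * V x' ≤ Tm * (B * U x') := by
        simpa using hcross (fun _ => ENNReal.ofReal σm)
          (fun y => ENNReal.ofReal (q x' y - σm)) measurable_const (hwm x')
      have h4 : U x * V x' ≤ Tm * (V x * U x') := by
        simpa using hcross (fun y => ENNReal.ofReal (q x y - σm))
          (fun y => ENNReal.ofReal (q x' y - σm)) (hwm x) (hwm x')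
      have hκσ : κ * σm = σp - σm := by rw [hκdef]; field_simp
      have h5 : ∀ z, V z ≤ ENNReal.ofReal κ * B := by
        intro z
        have hpt : ∀ y, ENNReal.ofReal (q z y - σm) * Q y
            ≤ ENNReal.ofReal κ * (ENNReal.ofReal σm * Q y) := by
          intro y
          have hre : ENNReal.ofReal κ * (ENNReal.ofReal σm * Q y)
              = ENNReal.ofReal (κ * σm) * Q y := by
            rw [ENNReal.ofReal_mul hκ0, mul_assoc]
          rw [hre]
          exact mul_le_mul'
            (ENNReal.ofReal_le_ofReal (by linarith [hqu z y, hκσ])) le_rfl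
        calc V z ≤ ∫⁻ y, ENNReal.ofReal κ * (ENNReal.ofReal σm * Q y) ∂μ :=
              lintegral_mono hpt
        _ = ENNReal.ofReal κ * B := lintegral_const_mul _ (measurable_const.mul hQm)
      have h7 : ∀ z, U z ≤ ENNReal.ofReal κ * A := by
        intro z
        have hpt : ∀ y, ENNReal.ofReal (q z y - σm) * P y
            ≤ ENNReal.ofReal κ * (ENNReal.ofReal σm * P y) := by
          intro y
          have hre : ENNReal.ofReal κ * (ENNReal.ofReal σm * P y)
              = ENNReal.ofReal (κ * σm) * P y := by
            rw [ENNReal.ofReal_mul hκ0, mul_assoc]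
          rw [hre]
          exact mul_le_mul'
            (ENNReal.ofReal_le_ofReal (by linarith [hqu z y, hκσ])) le_rfl
        calc U z ≤ ∫⁻ y, ENNReal.ofReal κ * (ENNReal.ofReal σm * P y) ∂μ :=
              lintegral_mono hpt
        _ = ENNReal.ofReal κ * A := lintegral_const_mul _ (measurable_const.mul hPm)
      have hLfin : ∀ k z, L μ q g k z ≠ ⊤ := fun k z =>
        L_ne_top hσm.le hql hqu g hgm hg0 hgi k z
      have hLpos : ∀ k z, L μ q g k z ≠ 0 := fun k z =>
        L_ne_zero hσm hql hqu g hgm hg0 hgpos k z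
      have hAfin : A ≠ ⊤ :=
        ne_top_of_le_ne_top (hLfin (m+2) x) ((hrec1 x) ▸ le_self_add)
      have hBfin : B ≠ ⊤ :=
        ne_top_of_le_ne_top (hLfin (m+1) x) ((hrec0 x) ▸ le_self_add)
      have hUfin : ∀ z, U z ≠ ⊤ := fun z =>
        ne_top_of_le_ne_top (hLfin (m+2) z) ((hrec1 z) ▸ le_add_self)
      have hVfin : ∀ z, V z ≠ ⊤ := fun z =>
        ne_top_of_le_ne_top (hLfin (m+1) z) ((hrec0 z) ▸ le_add_self)
      have h1pκ : ENNReal.ofReal (1 + κ) = 1 + ENNReal.ofReal κ := by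
        rw [ENNReal.ofReal_add zero_le_one hκ0, ENNReal.ofReal_one]
      have hApos : A ≠ 0 := by
        intro h0
        have hle : L μ q g (m+2) x ≤ ENNReal.ofReal (1 + κ) * A := by
          rw [hrec1 x, h1pκ, add_mul, one_mul]
          exact add_le_add le_rfl (h7 x)
        rw [h0, mul_zero] at hle
        exact hLpos (m+2) x (le_antisymm hle zero_le)
      have hBpos : B ≠ 0 := by
        intro h0
        have hle : L μ q g (m+1) x ≤ ENNReal.ofReal (1 + κ) * B := by
          rw [hrec0 x, h1pκ, add_mul, one_mul]
          exact add_le_add le_rfl (h5 x)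
        rw [h0, mul_zero] at hle
        exact hLpos (m+1) x (le_antisymm hle zero_le)
      have hKm0 : 0 ≤ Km := mul_nonneg (pow_nonneg hρ0 m) hκ0
      have h1Km : (0:ℝ) ≤ 1 + Km := by linarith
      -- convert to reals
      have h2r : (U x).toReal * B.toReal ≤ (1 + Km) * ((V x).toReal * A.toReal) := by
        have hfin : Tm * (V x * A) ≠ ⊤ :=
          ENNReal.mul_ne_top ENNReal.ofReal_ne_top (ENNReal.mul_ne_top (hVfin x) hAfin)
        have := ENNReal.toReal_mono hfin h2
        rwa [ENNReal.toReal_mul, ENNReal.toReal_mul, ENNReal.toReal_mul, hTmdef,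
          ENNReal.toReal_ofReal h1Km] at this
      have h3r : A.toReal * (V x').toReal ≤ (1 + Km) * (B.toReal * (U x').toReal) := by
        have hfin : Tm * (B * U x') ≠ ⊤ :=
          ENNReal.mul_ne_top ENNReal.ofReal_ne_top (ENNReal.mul_ne_top hBfin (hUfin x'))
        have := ENNReal.toReal_mono hfin h3
        rwa [ENNReal.toReal_mul, ENNReal.toReal_mul, ENNReal.toReal_mul, hTmdef,
          ENNReal.toReal_ofReal h1Km] at this
      have h4r : (U x).toReal * (V x').toReal ≤ (1 + Km) * ((V x).toReal * (U x').toReal) := by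
        have hfin : Tm * (V x * U x') ≠ ⊤ :=
          ENNReal.mul_ne_top ENNReal.ofReal_ne_top (ENNReal.mul_ne_top (hVfin x) (hUfin x'))
        have := ENNReal.toReal_mono hfin h4
        rwa [ENNReal.toReal_mul, ENNReal.toReal_mul, ENNReal.toReal_mul, hTmdef,
          ENNReal.toReal_ofReal h1Km] at this
      have h5r : (V x).toReal ≤ κ * B.toReal := by
        have hfin : ENNReal.ofReal κ * B ≠ ⊤ :=
          ENNReal.mul_ne_top ENNReal.ofReal_ne_top hBfin
        have := ENNReal.toReal_mono hfin (h5 x)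
        rwa [ENNReal.toReal_mul, ENNReal.toReal_ofReal hκ0] at this
      have h6r : (V x').toReal ≤ κ * B.toReal := by
        have hfin : ENNReal.ofReal κ * B ≠ ⊤ :=
          ENNReal.mul_ne_top ENNReal.ofReal_ne_top hBfin
        have := ENNReal.toReal_mono hfin (h5 x')
        rwa [ENNReal.toReal_mul, ENNReal.toReal_ofReal hκ0] at this
      have h7r : (U x').toReal ≤ κ * A.toReal := by
        have hfin : ENNReal.ofReal κ * A ≠ ⊤ :=
          ENNReal.mul_ne_top ENNReal.ofReal_ne_top hAfin
        have := ENNReal.toReal_mono hfin (h7 x')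
        rwa [ENNReal.toReal_mul, ENNReal.toReal_ofReal hκ0] at this
      have key := alg_key κ ρ Km A.toReal B.toReal (U x).toReal (V x).toReal
        (U x').toReal (V x').toReal hκ0 hρ0 hρ1 hρκ hKm0
        (ENNReal.toReal_pos hApos hAfin) (ENNReal.toReal_pos hBpos hBfin)
        ENNReal.toReal_nonneg ENNReal.toReal_nonneg ENNReal.toReal_nonneg
        ENNReal.toReal_nonneg h2r h3r h4r h5r h6r h7r
      have hconst : 1 + ρ * Km = 1 + ρ^(m+1) * κ := by rw [hKmdef]; ring
      have hAUfin : A + U x ≠ ⊤ := (hrec1 x) ▸ hLfin (m+2) x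
      have hAU'fin : A + U x' ≠ ⊤ := (hrec1 x') ▸ hLfin (m+2) x'
      have hBVfin : B + V x ≠ ⊤ := (hrec0 x) ▸ hLfin (m+1) x
      have hBV'fin : B + V x' ≠ ⊤ := (hrec0 x') ▸ hLfin (m+1) x'
      calc L μ q g (m+1+1) x * L μ q g (m+1) x'
          = (A + U x) * (B + V x') := by rw [hrec1 x, hrec0 x']
        _ = ENNReal.ofReal ((A.toReal + (U x).toReal) * (B.toReal + (V x').toReal)) := by
            rw [← ENNReal.toReal_add hAfin (hUfin x), ← ENNReal.toReal_add hBfin (hVfin x'),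
              ← ENNReal.toReal_mul, ENNReal.ofReal_toReal (ENNReal.mul_ne_top hAUfin hBV'fin)]
        _ ≤ ENNReal.ofReal ((1 + ρ * Km) *
              ((A.toReal + (U x').toReal) * (B.toReal + (V x).toReal))) :=
            ENNReal.ofReal_le_ofReal key
        _ = ENNReal.ofReal (1 + ρ^(m+1) * κ) * ((A + U x') * (B + V x)) := by
            rw [ENNReal.ofReal_mul (by linarith [mul_nonneg hρ0 hKm0] : (0:ℝ) ≤ 1 + ρ * Km)]
            rw [hconst]
            congr 1
            rw [← ENNReal.toReal_add hAfin (hUfin x'), ← ENNReal.toReal_add hBfin (hVfin x),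
              ← ENNReal.toReal_mul, ENNReal.ofReal_toReal (ENNReal.mul_ne_top hAU'fin hBVfin)]
        _ = ENNReal.ofReal (1 + ρ^(m+1) * κ) * (L μ q g (m+1+1) x' * L μ q g (m+1) x) := by
            rw [hrec1 x', hrec0 x]

end OneStepAux

/-- inequality (12) of Lemma 3, explicit form. For every
`n ≥ 1` and all initial points `x, x′`, the one-step conditional log-densities
differ by at most `ρ^{n−1}/(1 − ρ)`, where `ρ = 1 − σ₋/σ₊`. -/
theorem one_step_log_density_forgetting
    {X : Type*} [MeasurableSpace X] (μ : Measure X) [IsProbabilityMeasure μ]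
    (σm σp : ℝ) (hσm : 0 < σm) (hσ : σm ≤ σp)
    (q : X → X → ℝ) (hq : Measurable (Function.uncurry q))
    (hql : ∀ x x', σm ≤ q x x') (hqu : ∀ x x', q x x' ≤ σp)
    (g : ℕ → X → ℝ) (hgm : ∀ k, 1 ≤ k → Measurable (g k))
    (hg0 : ∀ k, 1 ≤ k → ∀ x, 0 ≤ g k x)
    (hgi : ∀ k, 1 ≤ k → Integrable (g k) μ)
    (hgpos : ∀ k, 1 ≤ k → 0 < ∫ x, g k x ∂μ)
    (n : ℕ) (hn : 1 ≤ n) (x x' : X) :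
    |Real.log (Nseq μ q g x n / Nseq μ q g x (n - 1)) -
        Real.log (Nseq μ q g x' n / Nseq μ q g x' (n - 1))| ≤
      (1 - σm / σp) ^ (n - 1) / (1 - (1 - σm / σp)) := by
  classical
  have hσp : 0 < σp := lt_of_lt_of_le hσm hσ
  obtain ⟨m, rfl⟩ : ∃ m, n = m + 1 := ⟨n - 1, (Nat.succ_pred_eq_of_pos hn).symm⟩
  simp only [Nat.add_sub_cancel]
  set ρ : ℝ := 1 - σm / σp with hρdef
  set κ : ℝ := (σp - σm) / σm with hκdef
  have hκ0 : 0 ≤ κ := div_nonneg (by linarith) hσm.le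
  have hρ0 : 0 ≤ ρ := by
    rw [hρdef]
    have : σm / σp ≤ 1 := by rw [div_le_one hσp]; exact hσ
    linarith
  -- identify Nseq with L
  have hN : ∀ (k : ℕ) (z : X), Nseq μ q g z k = (OneStepAux.L μ q g k z).toReal := by
    intro k z
    rw [OneStepAux.Nseq_eq_toReal μ hσm.le hq hql g hgm hg0 z k,
      OneStepAux.Lpi_eq_L μ hq g hgm k z]
  have hLfin : ∀ (k : ℕ) (z : X), OneStepAux.L μ q g k z ≠ ⊤ := fun k z =>
    OneStepAux.L_ne_top hσm.le hql hqu g hgm hg0 hgi k z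
  have hLpos : ∀ (k : ℕ) (z : X), OneStepAux.L μ q g k z ≠ 0 := fun k z =>
    OneStepAux.L_ne_zero hσm hql hqu g hgm hg0 hgpos k z
  have hNpos : ∀ (k : ℕ) (z : X), 0 < Nseq μ q g z k := by
    intro k z
    rw [hN k z]
    exact ENNReal.toReal_pos (hLpos k z) (hLfin k z)
  set C : ℝ := 1 + ρ ^ m * κ with hCdef
  have hC1 : 1 ≤ C := by
    have := mul_nonneg (pow_nonneg hρ0 m) hκ0
    rw [hCdef]; linarith
  have hC0 : 0 < C := by linarith
  -- the two main inequalities in real form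
  have hmain : ∀ z z' : X,
      Nseq μ q g z (m+1) * Nseq μ q g z' m ≤ C * (Nseq μ q g z' (m+1) * Nseq μ q g z m) := by
    intro z z'
    have h := OneStepAux.main_claim hσm hσ hq hql hqu m g hgm hg0 hgi hgpos z z'
    have hfin : ENNReal.ofReal C *
        (OneStepAux.L μ q g (m+1) z' * OneStepAux.L μ q g m z) ≠ ⊤ :=
      ENNReal.mul_ne_top ENNReal.ofReal_ne_top
        (ENNReal.mul_ne_top (hLfin (m+1) z') (hLfin m z))
    have h2 := ENNReal.toReal_mono hfin h
    rw [ENNReal.toReal_mul, ENNReal.toReal_mul, ENNReal.toReal_mul,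
      ENNReal.toReal_ofReal hC0.le] at h2
    simpa only [hN] using h2
  have h1 := hmain x x'
  have h2 := hmain x' x
  set p1 := Nseq μ q g x (m+1) with hp1
  set p2 := Nseq μ q g x m with hp2
  set p3 := Nseq μ q g x' (m+1) with hp3
  set p4 := Nseq μ q g x' m with hp4
  have hp1p := hNpos (m+1) x
  have hp2p := hNpos m x
  have hp3p := hNpos (m+1) x'
  have hp4p := hNpos m x'
  have hlog1 : Real.log p1 + Real.log p4 ≤ Real.log C + (Real.log p3 + Real.log p2) := by
    have := Real.log_le_log (by positivity) h1
    rwa [Real.log_mul (ne_of_gt hp1p) (ne_of_gt hp4p),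
      Real.log_mul (ne_of_gt hC0) (by positivity),
      Real.log_mul (ne_of_gt hp3p) (ne_of_gt hp2p)] at this
  have hlog2 : Real.log p3 + Real.log p2 ≤ Real.log C + (Real.log p1 + Real.log p4) := by
    have := Real.log_le_log (by positivity) h2
    rwa [Real.log_mul (ne_of_gt hp3p) (ne_of_gt hp2p),
      Real.log_mul (ne_of_gt hC0) (by positivity),
      Real.log_mul (ne_of_gt hp1p) (ne_of_gt hp4p)] at this
  have hlogC : Real.log C ≤ ρ ^ m * κ := by
    have := Real.log_le_sub_one_of_pos hC0
    rw [hCdef] at this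
    linarith
  have hbound : ρ ^ m * κ ≤ ρ ^ m / (1 - ρ) := by
    have h1ρ : 1 - ρ = σm / σp := by rw [hρdef]; ring
    have hκle : κ ≤ σp / σm := by
      rw [hκdef]
      gcongr
      linarith
    have heq : ρ ^ m / (1 - ρ) = ρ ^ m * (σp / σm) := by
      rw [h1ρ, div_div_eq_mul_div, mul_div_assoc]
    rw [heq]
    exact mul_le_mul_of_nonneg_left hκle (pow_nonneg hρ0 m)
  rw [Real.log_div (ne_of_gt hp1p) (ne_of_gt hp2p),
    Real.log_div (ne_of_gt hp3p) (ne_of_gt hp4p), abs_le]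
  constructor
  · linarith
  · linarith
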